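/- Let X and Y be Polish spaces, μ a Borel probability measure on X, ν a Borel probability measure on Y, s ∈ ℝ, and ρ : X × Y → ℝ a Borel measurable function. Assume Z(x) = ∫_Y e^{s ρ(x,y)} ν(dy) ∈ (0, ∞) for μ-almost every x and that x ↦ log Z(x) is μ-integrable. Define the Markov kernel κ* by κ*(x)(dy) = e^{s ρ(x,y)} ν(dy) / Z(x). Then for every Markov kernel κ from X to Y such that ρ is integrable with respect to μ ⊗ κ, one has D_KL(μ ⊗ κ ‖ μ × ν) − s ∫ ρ d(μ ⊗ κ) ≥ − ∫_X log Z(x) μ(dx), and if ρ is integrable with respect to μ ⊗ κ* then equality holds for κ = κ*, i.e. D_KL(μ ⊗ κ* ‖ μ × ν) − s ∫ ρ d(μ ⊗ κ*) = − ∫_X log Z(x) μ(dx). In particular κ* minimizes the Lagrangian functional κ ↦ D_KL(μ ⊗ κ ‖ μ × ν) − s ∫ ρ d(μ ⊗ κ). -/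

import Mathlib

open MeasureTheory ProbabilityTheory Filter Topology Classical
open scoped ENNReal NNReal

/-- The Kullback-Leibler divergence `D_KL(P ‖ Q)`, valued in `[0,∞]`. -/
noncomputable def klDiv {Z : Type*} [MeasurableSpace Z] (P Q : Measure Z) : ℝ≥0∞ :=
  if P ≪ Q ∧ Integrable (MeasureTheory.llr P Q) P
  then ENNReal.ofReal (∫ z, MeasureTheory.llr P Q z ∂P) else ⊤

/-- Gibbs' inequality: the KL integrand has nonnegative integral. -/
lemma gibbs_nonneg {α : Type*} [MeasurableSpace α] {P Q : Measure α}
    [IsProbabilityMeasure P] [IsProbabilityMeasure Q] (h : P ≪ Q)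
    (hi : Integrable (llr P Q) P) : 0 ≤ ∫ x, llr P Q x ∂P := by
  have hint : Integrable (fun x => (Q.rnDeriv P x).toReal) P :=
    Measure.integrable_toReal_rnDeriv
  have hexp : Integrable (Real.exp ∘ fun x => -llr P Q x) P := by
    refine hint.congr ?_
    filter_upwards [exp_neg_llr h] with x hx
    exact hx.symm
  have h1 : Real.exp (∫ x, -llr P Q x ∂P) ≤ ∫ x, Real.exp (-llr P Q x) ∂P := by
    have := convexOn_exp.map_average_le Real.continuous_exp.continuousOn isClosed_univ
      (Filter.Eventually.of_forall (fun x => Set.mem_univ (-llr P Q x))) hi.neg hexp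
    simpa [average_eq_integral] using this
  have h2 : ∫ x, Real.exp (-llr P Q x) ∂P ≤ 1 := by
    rw [integral_congr_ae (exp_neg_llr h)]
    rw [Measure.integral_toReal_rnDeriv']
    simp only [measureReal_def, measure_univ, ENNReal.toReal_one]
    have : (0:ℝ) ≤ (Q.singularPart P Set.univ).toReal := ENNReal.toReal_nonneg
    linarith
  rw [integral_neg] at h1
  have := h1.trans h2
  rw [Real.exp_le_one_iff] at this
  linarith

/-- the exponentially tilted kernel
`κ*(x)(dy) = e^{s ρ(x,y)} ν(dy) / Z(x)` minimizes the Lagrangian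
`κ ↦ D_KL(μ ⊗ κ ‖ μ × ν) - s ∫ ρ d(μ ⊗ κ)` over Markov kernels, with minimum value
`-∫ log Z dμ`.  The inequality and the equality for `κ*` are stated in the extended reals. -/
theorem stmt_9
    {X Y : Type*}
    [TopologicalSpace X] [PolishSpace X] [MeasurableSpace X] [BorelSpace X]
    [TopologicalSpace Y] [PolishSpace Y] [MeasurableSpace Y] [BorelSpace Y]
    (μ : Measure X) [IsProbabilityMeasure μ] (ν : Measure Y) [IsProbabilityMeasure ν]
    (s : ℝ) (ρ : X × Y → ℝ) (hρ : Measurable ρ)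
    -- the normalizing constant `Z(x) = ∫ e^{s ρ(x,y)} ν(dy)`
    (Z : X → ℝ≥0∞)
    (hZ : ∀ x, Z x = ∫⁻ y, ENNReal.ofReal (Real.exp (s * ρ (x, y))) ∂ν)
    (hZpos : ∀ᵐ x ∂μ, 0 < Z x ∧ Z x < ⊤)
    (hZlog : Integrable (fun x => Real.log (Z x).toReal) μ)
    -- `κ*` is the exponential tilting of `ν` by `s ρ(x, ·)`, normalized by `Z x`
    (κstar : ProbabilityTheory.Kernel X Y) [IsMarkovKernel κstar]
    (hκstar : ∀ᵐ x ∂μ,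
      κstar x = ν.withDensity fun y => ENNReal.ofReal (Real.exp (s * ρ (x, y))) / Z x) :
    (∀ κ : ProbabilityTheory.Kernel X Y, IsMarkovKernel κ →
      Integrable ρ (μ ⊗ₘ κ) →
      ((- ∫ x, Real.log (Z x).toReal ∂μ : ℝ) : EReal) ≤
        (klDiv (μ ⊗ₘ κ) (μ.prod ν) : EReal) - ((s * ∫ p, ρ p ∂(μ ⊗ₘ κ) : ℝ) : EReal)) ∧
    (Integrable ρ (μ ⊗ₘ κstar) →
      (klDiv (μ ⊗ₘ κstar) (μ.prod ν) : EReal) -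
          ((s * ∫ p, ρ p ∂(μ ⊗ₘ κstar) : ℝ) : EReal) =
        ((- ∫ x, Real.log (Z x).toReal ∂μ : ℝ) : EReal)) := by
  -- notation
  set G : X × Y → ℝ≥0∞ := fun p => ENNReal.ofReal (Real.exp (s * ρ p)) / Z p.1 with hGdef
  have hZm : Measurable Z := by
    have : Z = fun x => ∫⁻ y, ENNReal.ofReal (Real.exp (s * ρ (x, y))) ∂ν := funext hZ
    rw [this]
    exact Measurable.lintegral_prod_right' ((hρ.const_mul s).exp.ennreal_ofReal)
  have hGm : Measurable G :=
    ((hρ.const_mul s).exp.ennreal_ofReal).div (hZm.comp measurable_fst)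
  set Q : Measure (X × Y) := μ.prod ν with hQdef
  set Qs : Measure (X × Y) := μ ⊗ₘ κstar with hQsdef
  -- transfer Z positivity to the product measure
  have hZset : MeasurableSet {x | 0 < Z x ∧ Z x < ⊤} := hZm measurableSet_Ioo
  have hfstQ : Q.map Prod.fst = μ := by
    rw [show Q.map Prod.fst = Q.fst from rfl, Measure.fst_prod]
  have hZprod : ∀ᵐ p ∂Q, 0 < Z p.1 ∧ Z p.1 < ⊤ := by
    have h' : ∀ᵐ x ∂(Q.map Prod.fst), 0 < Z x ∧ Z x < ⊤ := by rwa [hfstQ]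
    exact (ae_map_iff measurable_fst.aemeasurable hZset).mp h'
  have hGpos : ∀ᵐ p ∂Q, G p ≠ 0 ∧ G p ≠ ⊤ := by
    filter_upwards [hZprod] with p hp
    constructor
    · intro h
      simp only [hGdef] at h
      rw [ENNReal.div_eq_zero_iff] at h
      rcases h with h | h
      · exact (ENNReal.ofReal_pos.mpr (Real.exp_pos _)).ne' h
      · exact hp.2.ne h
    · intro h
      simp only [hGdef] at h
      rw [ENNReal.div_eq_top] at h
      rcases h with ⟨h1, h2⟩ | ⟨h1, h2⟩
      · exact hp.1.ne' h2
      · exact ENNReal.ofReal_ne_top h1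
  -- Claim A : μ ⊗ₘ κstar = Q.withDensity G
  have hA : Qs = Q.withDensity G := by
    ext t ht
    have key : ∀ᵐ x ∂μ, κstar x (Prod.mk x ⁻¹' t) = ∫⁻ y, t.indicator G (x, y) ∂ν := by
      filter_upwards [hκstar] with x hx
      rw [hx, withDensity_apply _ (measurable_prodMk_left ht),
        ← lintegral_indicator (measurable_prodMk_left ht)]
      refine lintegral_congr fun y => ?_
      by_cases hy : (x, y) ∈ t
      · rw [Set.indicator_of_mem (Set.mem_preimage.mpr hy), Set.indicator_of_mem hy]
      · rw [Set.indicator_of_notMem (fun h => hy (Set.mem_preimage.mp h)),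
          Set.indicator_of_notMem hy]
    calc Qs t = ∫⁻ x, κstar x (Prod.mk x ⁻¹' t) ∂μ := Measure.compProd_apply ht
    _ = ∫⁻ x, ∫⁻ y, t.indicator G (x, y) ∂ν ∂μ := lintegral_congr_ae key
    _ = ∫⁻ p, t.indicator G p ∂Q := (lintegral_prod _ (hGm.indicator ht).aemeasurable).symm
    _ = Q.withDensity G t := by rw [withDensity_apply _ ht, lintegral_indicator ht]
  -- absolute continuity in both directions
  have habs1 : Qs ≪ Q := by rw [hA]; exact withDensity_absolutelyContinuous _ _
  have habs2 : Q ≪ Qs := by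
    rw [hA]
    conv_lhs => rw [← withDensity_inv_same hGm (hGpos.mono fun _ h => h.1)
      (hGpos.mono fun _ h => h.2)]
    exact withDensity_absolutelyContinuous _ _
  have hrnG : Qs.rnDeriv Q =ᵐ[Q] G := by
    rw [hA]; exact Measure.rnDeriv_withDensity _ hGm
  -- log of G
  have hlogG : ∀ᵐ p ∂Q, Real.log (G p).toReal = s * ρ p - Real.log (Z p.1).toReal := by
    filter_upwards [hZprod] with p hp
    rw [hGdef]
    simp only
    rw [ENNReal.toReal_div, ENNReal.toReal_ofReal (Real.exp_nonneg _),
      Real.log_div (Real.exp_pos _).ne' (ENNReal.toReal_pos hp.1.ne' hp.2.ne).ne',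
      Real.log_exp]
  -- integrability/integral of log Z composed with fst, for any Markov kernel κ
  have hlogZfst : ∀ (κ : ProbabilityTheory.Kernel X Y), IsMarkovKernel κ →
      Integrable (fun p : X × Y => Real.log (Z p.1).toReal) (μ ⊗ₘ κ) ∧
      ∫ p, Real.log (Z p.1).toReal ∂(μ ⊗ₘ κ) = ∫ x, Real.log (Z x).toReal ∂μ := by
    intro κ hκ
    have hmap : (μ ⊗ₘ κ).map Prod.fst = μ := by
      rw [show (μ ⊗ₘ κ).map Prod.fst = (μ ⊗ₘ κ).fst from rfl, Measure.fst_compProd]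
    have hsm : AEStronglyMeasurable (fun x => Real.log (Z x).toReal)
        ((μ ⊗ₘ κ).map Prod.fst) := (hZm.ennreal_toReal.log).aestronglyMeasurable
    constructor
    · have := hZlog
      rw [← hmap] at this
      exact (integrable_map_measure hsm measurable_fst.aemeasurable).mp this
    · have h2 := integral_map (f := fun x => Real.log (Z x).toReal) (φ := Prod.fst)
        (μ := μ ⊗ₘ κ) measurable_fst.aemeasurable hsm
      rw [hmap] at h2
      exact h2.symm
  -- the key identity for any κ with μ ⊗ₘ κ ≪ Q and integrable llr
  have main : ∀ (κ : ProbabilityTheory.Kernel X Y), IsMarkovKernel κ →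
      Integrable ρ (μ ⊗ₘ κ) → (μ ⊗ₘ κ) ≪ Q → Integrable (llr (μ ⊗ₘ κ) Q) (μ ⊗ₘ κ) →
      ∫ p, llr (μ ⊗ₘ κ) Q p ∂(μ ⊗ₘ κ) =
        (∫ p, llr (μ ⊗ₘ κ) Qs p ∂(μ ⊗ₘ κ)) + (s * ∫ p, ρ p ∂(μ ⊗ₘ κ)
          - ∫ x, Real.log (Z x).toReal ∂μ) ∧
      0 ≤ ∫ p, llr (μ ⊗ₘ κ) Qs p ∂(μ ⊗ₘ κ) := by
    intro κ hκ hρint hPQ hillr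
    set P : Measure (X × Y) := μ ⊗ₘ κ with hPdef
    have hPQs : P ≪ Qs := hPQ.trans habs2
    have hchain : P.rnDeriv Qs * Qs.rnDeriv Q =ᵐ[Q] P.rnDeriv Q :=
      Measure.rnDeriv_mul_rnDeriv hPQs
    have hllr : llr P Q =ᵐ[P] fun p => llr P Qs p + (s * ρ p - Real.log (Z p.1).toReal) := by
      filter_upwards [hPQ.ae_le hchain, hPQ.ae_le hrnG, Measure.rnDeriv_pos hPQs,
        hPQs.ae_le (Measure.rnDeriv_lt_top P Qs), hPQ.ae_le hGpos, hPQ.ae_le hlogG]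
        with p h1 h2 h3 h4 h5 h6
      have hne1 : ((P.rnDeriv Qs p).toReal : ℝ) ≠ 0 :=
        (ENNReal.toReal_pos h3.ne' h4.ne).ne'
      have hne2 : ((G p).toReal : ℝ) ≠ 0 :=
        (ENNReal.toReal_pos h5.1 h5.2).ne'
      have : P.rnDeriv Q p = P.rnDeriv Qs p * G p := by
        rw [← h1]; simp only [Pi.mul_apply]; rw [h2]
      rw [llr, this, ENNReal.toReal_mul, Real.log_mul hne1 hne2, h6]
      rfl
    have hint2 : Integrable (fun p => s * ρ p - Real.log (Z p.1).toReal) P :=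
      (hρint.const_mul s).sub (hlogZfst κ hκ).1
    have hillrs : Integrable (llr P Qs) P := by
      refine ((hillr.sub hint2).congr ?_)
      filter_upwards [hllr] with p hp
      simp only [Pi.sub_apply]
      rw [hp]; ring
    constructor
    · rw [integral_congr_ae hllr, integral_add hillrs hint2, integral_sub
        (hρint.const_mul s) (hlogZfst κ hκ).1, integral_const_mul, (hlogZfst κ hκ).2]
    · exact gibbs_nonneg hPQs hillrs
  constructor
  · -- inequality for arbitrary κ
    intro κ hκ hρint
    by_cases hcase : (μ ⊗ₘ κ) ≪ Q ∧ Integrable (llr (μ ⊗ₘ κ) Q) (μ ⊗ₘ κ)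
    · obtain ⟨hPQ, hillr⟩ := hcase
      obtain ⟨heq, hpos⟩ := main κ hκ hρint hPQ hillr
      have hI0 : 0 ≤ ∫ p, llr (μ ⊗ₘ κ) Q p ∂(μ ⊗ₘ κ) :=
        gibbs_nonneg hPQ hillr
      rw [klDiv, if_pos ⟨hPQ, hillr⟩]
      rw [EReal.coe_ennreal_ofReal, max_eq_left hI0, ← EReal.coe_sub, EReal.coe_le_coe_iff]
      rw [heq]
      linarith
    · rw [klDiv, if_neg hcase]
      rw [EReal.coe_ennreal_top, EReal.top_sub_coe]
      exact le_top
  · -- equality for κstar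
    intro hρint
    have hllrP : llr Qs Q =ᵐ[Qs] fun p => s * ρ p - Real.log (Z p.1).toReal := by
      filter_upwards [habs1.ae_le hrnG, habs1.ae_le hlogG] with p h1 h2
      rw [llr, h1, h2]
    have hint2 : Integrable (fun p => s * ρ p - Real.log (Z p.1).toReal) Qs :=
      (hρint.const_mul s).sub (hlogZfst κstar inferInstance).1
    have hillr : Integrable (llr Qs Q) Qs := hint2.congr hllrP.symm
    have hIeq : ∫ p, llr Qs Q p ∂Qs =
        s * ∫ p, ρ p ∂Qs - ∫ x, Real.log (Z x).toReal ∂μ := by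
      rw [integral_congr_ae hllrP, integral_sub (hρint.const_mul s)
        (hlogZfst κstar inferInstance).1, integral_const_mul, (hlogZfst κstar inferInstance).2]
    have hI0 : 0 ≤ ∫ p, llr Qs Q p ∂Qs := gibbs_nonneg habs1 hillr
    rw [klDiv, if_pos ⟨habs1, hillr⟩]
    rw [EReal.coe_ennreal_ofReal, max_eq_left hI0, ← EReal.coe_sub, EReal.coe_eq_coe_iff]
    rw [hIeq]
    ring
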